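/- Let A be an n×n nonnegative irreducible matrix. Then there exists a vector x ∈ ℝ^n with all entries strictly positive such that A ⊗ x = μ(A)·x. -/

import Mathlib

open Filter Topology

/-- Max-times product of two square nonnegative matrices. -/
noncomputable def mProd {m : Type*} [Fintype m] (A B : Matrix m m NNReal) : Matrix m m NNReal :=
  fun i j => Finset.univ.sup fun k => A i k * B k j

/-- Max-times powers: `mPow A 0 = I`, `mPow A (k+1) = A ⊗ mPow A k`. -/
noncomputable def mPow {m : Type*} [Fintype m] [DecidableEq m] (A : Matrix m m NNReal) :
    ℕ → Matrix m m NNReal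
  | 0 => 1
  | k + 1 => mProd A (mPow A k)

/-- Max-times action of a matrix on a nonnegative vector. -/
noncomputable def mVec {m : Type*} [Fintype m] (A : Matrix m m NNReal) (x : m → NNReal) :
    m → NNReal :=
  fun i => Finset.univ.sup fun k => A i k * x k

/-- Maximum circuit geometric mean of a nonnegative matrix. -/
noncomputable def mu {m : Type*} [Fintype m] [DecidableEq m] (A : Matrix m m NNReal) : NNReal :=
  (Finset.Icc 1 (Fintype.card m)).sup fun ℓ =>
    Finset.univ.sup fun i => (mPow A ℓ i i) ^ ((ℓ : ℝ)⁻¹)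

/-- A nonnegative matrix is irreducible if its weighted digraph is strongly connected. -/
def MaxIrreducible {m : Type*} [Fintype m] [DecidableEq m] (A : Matrix m m NNReal) : Prop :=
  ∀ i j, ∃ k : ℕ, 1 ≤ k ∧ 0 < mPow A k i j

section Aux

variable {m : Type*} [Fintype m] [DecidableEq m]

/-- Weight of a walk of length `k` along vertex sequence `p`. -/
noncomputable def wProd (A : Matrix m m NNReal) (p : ℕ → m) (k : ℕ) : NNReal :=
  ∏ t ∈ Finset.range k, A (p t) (p (t + 1))

lemma mPow_succ_apply (A : Matrix m m NNReal) (k : ℕ) (i j : m) :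
    mPow A (k + 1) i j = Finset.univ.sup fun l => A i l * mPow A k l j := rfl

lemma wProd_le_mPow (A : Matrix m m NNReal) : ∀ (k : ℕ) (p : ℕ → m),
    wProd A p k ≤ mPow A k (p 0) (p k) := by
  intro k
  induction k with
  | zero => intro p; simp [wProd, mPow, Matrix.one_apply_eq]
  | succ k ih =>
    intro p
    have h1 : wProd A p (k + 1) = A (p 0) (p 1) * wProd A (fun t => p (t + 1)) k := by
      unfold wProd
      rw [Finset.prod_range_succ']
      exact mul_comm _ _
    rw [h1, mPow_succ_apply]
    calc A (p 0) (p 1) * wProd A (fun t => p (t + 1)) k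
        ≤ A (p 0) (p 1) * mPow A k (p 1) (p (k + 1)) :=
          mul_le_mul_right (ih (fun t => p (t + 1))) _
      _ ≤ _ := Finset.le_sup (f := fun l => A (p 0) l * mPow A k l (p (k + 1)))
          (Finset.mem_univ (p 1))

lemma sup_mul_one_apply (f : m → NNReal) (i : m) :
    (Finset.univ.sup fun l => f l * (1 : Matrix m m NNReal) l i) = f i := by
  apply le_antisymm
  · apply Finset.sup_le; intro l _
    by_cases h : l = i
    · subst h; simp [Matrix.one_apply_eq]
    · simp [Matrix.one_apply_ne h]
  · calc f i = f i * (1 : Matrix m m NNReal) i i := by simp [Matrix.one_apply_eq]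
      _ ≤ _ := Finset.le_sup (f := fun l => f l * (1 : Matrix m m NNReal) l i)
          (Finset.mem_univ i)

lemma mPow_one_apply (A : Matrix m m NNReal) (j i : m) : mPow A 1 j i = A j i := by
  rw [mPow_succ_apply]
  exact sup_mul_one_apply (fun l => A j l) i

lemma exists_walk [Nonempty m] (A : Matrix m m NNReal) :
    ∀ k, 1 ≤ k → ∀ j i : m, ∃ p : ℕ → m, p 0 = j ∧ p k = i ∧ wProd A p k = mPow A k j i := by
  intro k
  induction k with
  | zero => omega
  | succ k ih =>
    intro _ j i
    rcases Nat.eq_zero_or_pos k with hk | hk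
    · subst hk
      refine ⟨fun t => if t = 0 then j else i, by simp, by simp, ?_⟩
      simp [wProd, mPow_one_apply]
    · obtain ⟨m₀, -, hm₀⟩ := Finset.exists_mem_eq_sup Finset.univ Finset.univ_nonempty
        (fun l => A j l * mPow A k l i)
      obtain ⟨q, hq0, hqk, hq⟩ := ih hk m₀ i
      refine ⟨fun t => if t = 0 then j else q (t - 1), by simp, by simp [hqk], ?_⟩
      have h1 : wProd A (fun t => if t = 0 then j else q (t - 1)) (k + 1)
          = (∏ t ∈ Finset.range k, A (q t) (q (t + 1))) * (A j (q 0)) := by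
        unfold wProd
        rw [Finset.prod_range_succ']
        congr 1
      rw [h1, mPow_succ_apply, hm₀, hq0]
      rw [show (∏ t ∈ Finset.range k, A (q t) (q (t + 1))) = wProd A q k from rfl, hq]
      exact mul_comm _ _

omit [DecidableEq m] in
lemma pigeon [Nonempty m] (p : ℕ → m) :
    ∃ s t : ℕ, s < t ∧ t ≤ Fintype.card m ∧ p s = p t := by
  obtain ⟨a, b, hab, h⟩ := Fintype.exists_ne_map_eq_of_card_lt
    (fun x : Fin (Fintype.card m + 1) => p x) (by simp)
  rcases lt_or_gt_of_ne hab with h' | h'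
  · exact ⟨a, b, h', Nat.lt_succ_iff.mp b.isLt, h⟩
  · exact ⟨b, a, h', Nat.lt_succ_iff.mp a.isLt, h.symm⟩

lemma circuit_eq (A : Matrix m m NNReal) (p : ℕ → m) (s t : ℕ) (hst : s ≤ t) :
    wProd A (fun u => p (s + u)) (t - s) = ∏ u ∈ Finset.Ico s t, A (p u) (p (u + 1)) := by
  unfold wProd
  rw [Finset.range_eq_Ico]
  calc (∏ u ∈ Finset.Ico 0 (t - s), A (p (s + u)) (p (s + (u + 1))))
      = ∏ u ∈ Finset.Ico 0 (t - s), A (p (s + u)) (p (s + u + 1)) := by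
        simp only [← add_assoc]
    _ = ∏ u ∈ Finset.Ico (0 + s) (t - s + s), A (p u) (p (u + 1)) :=
        Finset.prod_Ico_add (fun u => A (p u) (p (u + 1))) 0 (t - s) s
    _ = ∏ u ∈ Finset.Ico s t, A (p u) (p (u + 1)) := by
        rw [Nat.zero_add, Nat.sub_add_cancel hst]

lemma splice_le (A : Matrix m m NNReal) (p : ℕ → m) (k s t : ℕ)
    (hst : s < t) (htk : t ≤ k) (hp : p s = p t)
    (hcirc : mPow A (t - s) (p s) (p s) ≤ 1) :
    wProd A p k ≤ wProd A (fun u => if u < s then p u else p (u + (t - s))) (k - (t - s)) := by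
  set c := t - s with hc
  set p' : ℕ → m := fun u => if u < s then p u else p (u + c) with hp'def
  set e : ℕ → NNReal := fun u => A (p u) (p (u + 1)) with he
  have hsc : s + c = t := by omega
  have hpe : ∀ w, w ≤ s → p' w = p w := by
    intro w hw
    rcases lt_or_eq_of_le hw with h | h
    · simp [hp'def, h]
    · subst h
      simp only [hp'def, lt_irrefl, if_false, hsc, ← hp]
  have h1 : wProd A p k
      = ((∏ u ∈ Finset.Ico 0 s, e u) * (∏ u ∈ Finset.Ico s t, e u)) * (∏ u ∈ Finset.Ico t k, e u) := by
    rw [Finset.prod_Ico_consecutive e (Nat.zero_le s) hst.le,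
      Finset.prod_Ico_consecutive e (Nat.zero_le t) htk]
    rw [wProd, Finset.range_eq_Ico]
  have h2 : wProd A p' (k - c) = (∏ u ∈ Finset.Ico 0 s, e u) * (∏ u ∈ Finset.Ico t k, e u) := by
    have hsk : s ≤ k - c := by omega
    rw [wProd, Finset.range_eq_Ico,
      ← Finset.prod_Ico_consecutive (fun u => A (p' u) (p' (u + 1))) (Nat.zero_le s) hsk]
    congr 1
    · apply Finset.prod_congr rfl
      intro u hu
      simp only [Finset.mem_Ico] at hu
      rw [hpe u (by omega), hpe (u + 1) (by omega)]
    · rw [show (∏ u ∈ Finset.Ico s (k - c), A (p' u) (p' (u + 1)))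
          = ∏ u ∈ Finset.Ico s (k - c), e (u + c) from ?_]
      · rw [Finset.prod_Ico_add' e s (k - c) c, hsc, Nat.sub_add_cancel (by omega : c ≤ k)]
      · apply Finset.prod_congr rfl
        intro u hu
        simp only [Finset.mem_Ico] at hu
        have h3 : p' u = p (u + c) := by simp [hp'def, Nat.not_lt.mpr hu.1]
        have h4 : p' (u + 1) = p (u + 1 + c) := by
          simp [hp'def, Nat.not_lt.mpr (by omega : s ≤ u + 1)]
        rw [h3, h4, he]
        congr 2
        omega
  have h3 : (∏ u ∈ Finset.Ico s t, e u) ≤ 1 := by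
    rw [← circuit_eq A p s t hst.le]
    calc wProd A (fun u => p (s + u)) c
        ≤ mPow A c (p (s + 0)) (p (s + c)) := wProd_le_mPow A c _
      _ = mPow A c (p s) (p s) := by rw [hsc, ← hp, Nat.add_zero]
      _ ≤ 1 := hcirc
  rw [h1, h2]
  calc (∏ u ∈ Finset.Ico 0 s, e u) * (∏ u ∈ Finset.Ico s t, e u) * (∏ u ∈ Finset.Ico t k, e u)
      ≤ (∏ u ∈ Finset.Ico 0 s, e u) * 1 * (∏ u ∈ Finset.Ico t k, e u) :=
        mul_le_mul_left (mul_le_mul_right h3 _) _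
    _ = _ := by rw [mul_one]

end Aux

section Aux2

variable {m : Type*} [Fintype m] [DecidableEq m]

lemma decomp [Nonempty m] (A : Matrix m m NNReal)
    (hshort : ∀ l ∈ Finset.Icc 1 (Fintype.card m), ∀ i : m, mPow A l i i ≤ 1) :
    ∀ k, 1 ≤ k → ∀ j i : m,
      mPow A k j i ≤ (Finset.Icc 1 (Fintype.card m)).sup (fun l => mPow A l j i) := by
  intro k
  induction k using Nat.strong_induction_on with
  | _ k IH =>
    intro hk j i
    by_cases hkN : k ≤ Fintype.card m
    · exact Finset.le_sup (f := fun l => mPow A l j i) (Finset.mem_Icc.mpr ⟨hk, hkN⟩)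
    · push_neg at hkN
      obtain ⟨p, hp0, hpk, hw⟩ := exists_walk A k hk j i
      obtain ⟨s, t, hst, htN, hpst⟩ := pigeon p
      have htk : t ≤ k := by omega
      have hcmem : (t - s) ∈ Finset.Icc 1 (Fintype.card m) :=
        Finset.mem_Icc.mpr ⟨by omega, by omega⟩
      have hcirc : mPow A (t - s) (p s) (p s) ≤ 1 := hshort (t - s) hcmem (p s)
      have hsp := splice_le A p k s t hst htk hpst hcirc
      have hp'0 : (if 0 < s then p 0 else p (0 + (t - s))) = j := by
        rcases Nat.eq_zero_or_pos s with hs0 | hs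
        · rw [if_neg (by omega)]
          have h6 : 0 + (t - s) = t := by omega
          rw [h6, ← hpst, hs0, hp0]
        · rw [if_pos hs, hp0]
      have hp'k : (if k - (t - s) < s then p (k - (t - s))
          else p (k - (t - s) + (t - s))) = i := by
        rw [if_neg (by omega), Nat.sub_add_cancel (by omega), hpk]
      calc mPow A k j i = wProd A p k := hw.symm
        _ ≤ wProd A (fun u => if u < s then p u else p (u + (t - s))) (k - (t - s)) := hsp
        _ ≤ mPow A (k - (t - s)) j i := by
            have h7 : wProd A (fun u => if u < s then p u else p (u + (t - s))) (k - (t - s))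
                ≤ mPow A (k - (t - s)) (if 0 < s then p 0 else p (0 + (t - s)))
                  (if k - (t - s) < s then p (k - (t - s))
                    else p (k - (t - s) + (t - s))) :=
              wProd_le_mPow A (k - (t - s))
              (fun u => if u < s then p u else p (u + (t - s)))
            rwa [hp'0, hp'k] at h7
        _ ≤ _ := IH (k - (t - s)) (by omega) (by omega) j i

lemma mu_bound (A : Matrix m m NNReal) {l : ℕ} (hl : l ∈ Finset.Icc 1 (Fintype.card m)) (i : m) :
    mPow A l i i ≤ mu A ^ l := by
  have h1 : (mPow A l i i) ^ ((l : ℝ)⁻¹) ≤ mu A := by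
    refine le_trans ?_ (Finset.le_sup (f := fun ℓ => Finset.univ.sup
      fun i => (mPow A ℓ i i) ^ ((ℓ : ℝ)⁻¹)) hl)
    exact Finset.le_sup (f := fun i => (mPow A l i i) ^ ((l : ℝ)⁻¹)) (Finset.mem_univ i)
  have hl1 : (1 : ℕ) ≤ l := (Finset.mem_Icc.mp hl).1
  have hlne : (l : ℝ) ≠ 0 := Nat.cast_ne_zero.mpr (by omega)
  calc mPow A l i i = ((mPow A l i i) ^ ((l : ℝ)⁻¹)) ^ l := by
        rw [← NNReal.rpow_natCast (_ ^ _) l, ← NNReal.rpow_mul, inv_mul_cancel₀ hlne,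
          NNReal.rpow_one]
    _ ≤ (mu A) ^ l := pow_le_pow_left₀ zero_le h1 l

lemma mu_achieved [Nonempty m] (A : Matrix m m NNReal) :
    ∃ ℓ₀ ∈ Finset.Icc 1 (Fintype.card m), ∃ v : m, mPow A ℓ₀ v v = mu A ^ ℓ₀ := by
  have hN : 1 ≤ Fintype.card m := Fintype.card_pos
  obtain ⟨ℓ₀, hℓ₀, h1⟩ := Finset.exists_mem_eq_sup (Finset.Icc 1 (Fintype.card m))
    (Finset.nonempty_Icc.mpr hN) (fun ℓ => Finset.univ.sup fun i => (mPow A ℓ i i) ^ ((ℓ : ℝ)⁻¹))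
  obtain ⟨v, -, h2⟩ := Finset.exists_mem_eq_sup Finset.univ Finset.univ_nonempty
    (fun i => (mPow A ℓ₀ i i) ^ ((ℓ₀ : ℝ)⁻¹))
  have hmu : mu A = (mPow A ℓ₀ v v) ^ ((ℓ₀ : ℝ)⁻¹) := by rw [mu, h1, h2]
  have hlne : (ℓ₀ : ℝ) ≠ 0 := Nat.cast_ne_zero.mpr (by
    have := (Finset.mem_Icc.mp hℓ₀).1; omega)
  refine ⟨ℓ₀, hℓ₀, v, ?_⟩
  rw [hmu, ← NNReal.rpow_natCast (_ ^ _) ℓ₀, ← NNReal.rpow_mul, inv_mul_cancel₀ hlne,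
    NNReal.rpow_one]

lemma mu_pos [Nonempty m] (A : Matrix m m NNReal) (hA : MaxIrreducible A) : 0 < mu A := by
  classical
  obtain ⟨k, hk, hpos⟩ := hA (Classical.arbitrary m) (Classical.arbitrary m)
  have key : ∃ c, (1 ≤ c ∧ c ≤ Fintype.card m) ∧ ∃ w : m, 0 < mPow A c w w := by
    by_cases hkN : k ≤ Fintype.card m
    · exact ⟨k, ⟨hk, hkN⟩, _, hpos⟩
    · push_neg at hkN
      obtain ⟨p, hp0, hpk, hw⟩ := exists_walk A k hk _ _
      obtain ⟨s, t, hst, htN, hpst⟩ := pigeon p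
      set c := t - s with hc
      have hfac : ∀ u ∈ Finset.range k, A (p u) (p (u + 1)) ≠ 0 := by
        have h0 : wProd A p k ≠ 0 := by rw [hw]; exact hpos.ne'
        rw [wProd, Finset.prod_ne_zero_iff] at h0
        exact h0
      have hcircpos : 0 < wProd A (fun u => p (s + u)) c := by
        rw [pos_iff_ne_zero, wProd, Finset.prod_ne_zero_iff]
        intro u hu
        simp only [Finset.mem_range] at hu
        have h1 : s + (u + 1) = (s + u) + 1 := by omega
        rw [h1]
        exact hfac (s + u) (Finset.mem_range.mpr (by omega))
      have h2 : wProd A (fun u => p (s + u)) c ≤ mPow A c (p s) (p s) := by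
        have h3 := wProd_le_mPow A c (fun u => p (s + u))
        simpa [show s + c = t by omega, ← hpst] using h3
      exact ⟨c, ⟨by omega, by omega⟩, p s, lt_of_lt_of_le hcircpos h2⟩
  obtain ⟨c, ⟨hc1, hcN⟩, w, hcpos⟩ := key
  have h1 : (0 : NNReal) < (mPow A c w w) ^ ((c : ℝ)⁻¹) := NNReal.rpow_pos hcpos
  refine lt_of_lt_of_le h1 ?_
  refine le_trans (Finset.le_sup (f := fun i => (mPow A c i i) ^ ((c : ℝ)⁻¹)) (Finset.mem_univ w)) ?_
  exact Finset.le_sup (f := fun ℓ => Finset.univ.sup fun i => (mPow A ℓ i i) ^ ((ℓ : ℝ)⁻¹))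
    (Finset.mem_Icc.mpr ⟨hc1, hcN⟩)

lemma mPow_div (A : Matrix m m NNReal) (μ : NNReal) (hμ : μ ≠ 0) :
    ∀ (k : ℕ) (i j : m), mPow (fun i j => A i j / μ) k i j = mPow A k i j / μ ^ k := by
  intro k
  induction k with
  | zero => intro i j; simp [mPow]
  | succ k ih =>
    intro i j
    show (Finset.univ.sup fun l => A i l / μ * mPow (fun i j => A i j / μ) k l j) = _
    rw [mPow_succ_apply, NNReal.finset_sup_div]
    apply Finset.sup_congr rfl
    intro l _
    rw [ih l j, div_mul_div_comm, ← pow_succ']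

end Aux2

theorem stmt_6 (n : ℕ) (A : Matrix (Fin n) (Fin n) NNReal) (hA : MaxIrreducible A) :
    ∃ x : Fin n → NNReal, (∀ i, 0 < x i) ∧ mVec A x = fun i => mu A * x i := by
  rcases Nat.eq_zero_or_pos n with hn | hn
  · subst hn
    exact ⟨fun _ => 1, fun i => i.elim0, funext fun i => i.elim0⟩
  have : Nonempty (Fin n) := ⟨⟨0, hn⟩⟩
  have hμ : 0 < mu A := mu_pos A hA
  obtain ⟨ℓ₀, hℓ₀mem, v, hv⟩ := mu_achieved A
  set N := Fintype.card (Fin n) with hN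
  set B : Matrix (Fin n) (Fin n) NNReal := fun i j => A i j / mu A with hB
  have hBpow : ∀ (k : ℕ) (i j : Fin n), mPow B k i j = mPow A k i j / mu A ^ k :=
    mPow_div A (mu A) hμ.ne'
  have hshortB : ∀ l ∈ Finset.Icc 1 N, ∀ i : Fin n, mPow B l i i ≤ 1 := by
    intro l hl i
    rw [hBpow]
    exact div_le_one_of_le₀ (mu_bound A hl i) zero_le
  have hcritB : mPow B ℓ₀ v v = 1 := by
    rw [hBpow, hv]
    exact div_self (pow_ne_zero _ hμ.ne')
  set x : Fin n → NNReal := fun j => (Finset.Icc 1 N).sup fun l => mPow B l j v with hx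
  have hxpos : ∀ j, 0 < x j := by
    intro j
    obtain ⟨k, hk, hposA⟩ := hA j v
    have hposB : 0 < mPow B k j v := by
      rw [hBpow]
      exact div_pos hposA (pos_iff_ne_zero.mpr (pow_ne_zero _ hμ.ne'))
    exact lt_of_lt_of_le hposB (decomp B hshortB k hk j v)
  have hxv : (1 : NNReal) ≤ x v := by
    rw [hx, ← hcritB]
    exact Finset.le_sup (f := fun l => mPow B l v v) hℓ₀mem
  have hle : ∀ j, mVec B x j ≤ x j := by
    intro j
    apply Finset.sup_le
    intro k _
    rw [hx]
    rw [show B j k * ((Finset.Icc 1 N).sup fun l => mPow B l k v)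
        = (Finset.Icc 1 N).sup fun l => B j k * mPow B l k v from
      NNReal.mul_finset_sup _ _ _]
    apply Finset.sup_le
    intro l hl
    have h1 : B j k * mPow B l k v ≤ mPow B (l + 1) j v := by
      rw [mPow_succ_apply]
      exact Finset.le_sup (f := fun k' => B j k' * mPow B l k' v) (Finset.mem_univ k)
    refine le_trans h1 (le_trans (decomp B hshortB (l + 1) (by omega) j v) ?_)
    exact le_rfl
  have hge : ∀ j, x j ≤ mVec B x j := by
    intro j
    apply Finset.sup_le
    intro l hl
    obtain ⟨l', rfl⟩ : ∃ l', l = l' + 1 := by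
      have := (Finset.mem_Icc.mp hl).1; exact ⟨l - 1, by omega⟩
    rw [mPow_succ_apply]
    apply Finset.sup_le
    intro k _
    have h2 : mPow B l' k v ≤ x k := by
      rcases Nat.eq_zero_or_pos l' with h0 | h0
      · subst h0
        by_cases hkv : k = v
        · subst hkv
          calc mPow B 0 k k = 1 := Matrix.one_apply_eq k
            _ ≤ x k := hxv
        · calc mPow B 0 k v = 0 := Matrix.one_apply_ne hkv
            _ ≤ x k := zero_le
      · have hl'N : l' ≤ N := by
          have := (Finset.mem_Icc.mp hl).2; omega
        exact Finset.le_sup (f := fun l => mPow B l k v) (Finset.mem_Icc.mpr ⟨h0, hl'N⟩)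
    calc B j k * mPow B l' k v ≤ B j k * x k := mul_le_mul_right h2 _
      _ ≤ mVec B x j := Finset.le_sup (f := fun k => B j k * x k) (Finset.mem_univ k)
  have heig : ∀ j, mVec B x j = x j := fun j => le_antisymm (hle j) (hge j)
  refine ⟨x, hxpos, funext fun i => ?_⟩
  have hAB : ∀ k, A i k = mu A * B i k := by
    intro k
    rw [hB]
    rw [mul_comm, div_mul_cancel₀ _ hμ.ne']
  calc mVec A x i = Finset.univ.sup fun k => A i k * x k := rfl
    _ = Finset.univ.sup fun k => mu A * (B i k * x k) := by
        apply Finset.sup_congr rfl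
        intro k _
        rw [hAB k, mul_assoc]
    _ = mu A * Finset.univ.sup fun k => B i k * x k := (NNReal.mul_finset_sup _ _ _).symm
    _ = mu A * x i := by rw [show (Finset.univ.sup fun k => B i k * x k) = mVec B x i from rfl,
        heig i]
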